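/- arXiv:1811.03475 — 2 statements merged into one kernel-verified Lean document; each statement's English description precedes it below -/
import Mathlib

section
/- For every real ν and α, every n ∈ ℕ and every x > 0, the functions S_n^{ν,α} satisfy the recurrence S_{n+1}^{ν,α}(x) = (2n+1+ν+α) S_n^{ν,α}(x) − n (n+ν+α) S_{n−1}^{ν,α}(x) − x · S_n^{ν+1,α−1}(x). -/
open MeasureTheory Real Set
open scoped ContDiff

/-- The scaled Macdonald function `ρ_ν(x) = ∫₀^∞ t^(ν-1) e^(-t - x/t) dt`. -/
noncomputable def rho (ν : ℝ) (x : ℝ) : ℝ :=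
  ∫ t in Ioi (0:ℝ), t ^ (ν - 1) * Real.exp (-t - x / t)

/-- `S_n^{ν,α}(x) = dⁿ/dxⁿ [ x^{n+α} ρ_ν(x) ]`. -/
noncomputable def S (n : ℕ) (ν α : ℝ) (x : ℝ) : ℝ :=
  deriv^[n] (fun y : ℝ => y ^ ((n : ℝ) + α) * rho ν y) x

/-! ### Auxiliary lemmas -/

lemma rho_cont (a c : ℝ) :
    ContinuousOn (fun t : ℝ => t ^ a * Real.exp (-t - c / t)) (Ioi 0) := by
  intro t ht
  have ht' : (t : ℝ) ≠ 0 := (mem_Ioi.1 ht).ne'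
  refine ContinuousAt.continuousWithinAt ?_
  exact (Real.continuousAt_rpow_const t a (Or.inl ht')).mul
    (Real.continuous_exp.continuousAt.comp
      (continuousAt_id.neg.sub (continuousAt_const.div continuousAt_id ht')))

lemma rho_integrable (a : ℝ) {c : ℝ} (hc : 0 < c) :
    IntegrableOn (fun t : ℝ => t ^ a * Real.exp (-t - c / t)) (Ioi 0) := by
  obtain ⟨m, hm⟩ : ∃ m : ℕ, -a < (m : ℝ) := exists_nat_gt (-a)
  have h0 : (0:ℝ) < a + m + 1 := by linarith
  have hint : IntegrableOn (fun t : ℝ => (m.factorial / c ^ m) *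
      (Real.exp (-t) * t ^ (a + m))) (Ioi 0) := by
    have := (Real.GammaIntegral_convergent h0).const_mul ((m.factorial : ℝ) / c ^ m)
    simp [add_sub_cancel_right] at this; exact this
  refine Integrable.mono' hint ((rho_cont a c).aestronglyMeasurable measurableSet_Ioi) ?_
  refine (ae_restrict_iff' measurableSet_Ioi).2 (Filter.Eventually.of_forall fun t ht => ?_)
  have ht : (0:ℝ) < t := mem_Ioi.1 ht
  have h1 : Real.exp (-(c / t)) ≤ m.factorial * t ^ m / c ^ m := by
    have hct : 0 < c / t := div_pos hc ht
    have h2 : (c / t) ^ m / m.factorial ≤ Real.exp (c / t) :=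
      Real.pow_div_factorial_le_exp _ hct.le m
    have h3 : 0 < (c / t) ^ m / m.factorial :=
      div_pos (pow_pos hct m) (by positivity)
    rw [Real.exp_neg]
    rw [inv_le_comm₀ (Real.exp_pos _) (by positivity)]
    calc (m.factorial * t ^ m / c ^ m)⁻¹ = (c / t) ^ m / m.factorial := by
          rw [div_pow]; field_simp
      _ ≤ Real.exp (c / t) := h2
  have hpos : (0:ℝ) < t ^ a * Real.exp (-t - c / t) := by positivity
  rw [Real.norm_eq_abs, abs_of_pos hpos]
  have : t ^ a * Real.exp (-t - c / t)
      = t ^ a * Real.exp (-t) * Real.exp (-(c/t)) := by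
    rw [mul_assoc, ← Real.exp_add]; ring_nf
  rw [this]
  calc t ^ a * Real.exp (-t) * Real.exp (-(c/t))
      ≤ t ^ a * Real.exp (-t) * (m.factorial * t ^ m / c ^ m) := by
        refine mul_le_mul_of_nonneg_left h1 (by positivity)
    _ = (m.factorial / c ^ m) * (Real.exp (-t) * t ^ (a + m)) := by
        rw [Real.rpow_add ht, Real.rpow_natCast]; ring
  -- done

lemma rho_hasDerivAt (ν : ℝ) {x : ℝ} (hx : 0 < x) :
    HasDerivAt (rho ν) (-rho (ν - 1) x) x := by
  have hε : (0:ℝ) < x / 2 := by linarith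
  have key := hasDerivAt_integral_of_dominated_loc_of_deriv_le (μ := volume.restrict (Ioi 0))
    (F := fun y t => t ^ (ν - 1) * Real.exp (-t - y / t))
    (F' := fun y t => -(t ^ (ν - 1 - 1) * Real.exp (-t - y / t)))
    (x₀ := x) (bound := fun t => t ^ (ν - 1 - 1) * Real.exp (-t - (x/2) / t))
    (Metric.ball_mem_nhds x hε)
    (Filter.Eventually.of_forall fun y =>
      (rho_cont (ν - 1) y).aestronglyMeasurable measurableSet_Ioi)
    (rho_integrable (ν - 1) hx)
    (((rho_cont (ν - 1 - 1) x).aestronglyMeasurable measurableSet_Ioi).neg)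
    ?_ (rho_integrable (ν - 1 - 1) hε) ?_
  · have : (∫ t in Ioi (0:ℝ), -(t ^ (ν - 1 - 1) * Real.exp (-t - x / t)))
        = -rho (ν - 1) x := by
      rw [integral_neg]; rfl
    rw [this] at key
    exact key.2
  · refine (ae_restrict_iff' measurableSet_Ioi).2
      (Filter.Eventually.of_forall fun t ht y hy => ?_)
    have ht : (0:ℝ) < t := mem_Ioi.1 ht
    have hy2 : x / 2 ≤ y := by
      have := abs_lt.1 (mem_ball_iff_norm.1 hy)
      linarith [this.1]
    have hpos : (0:ℝ) < t ^ (ν - 1 - 1) * Real.exp (-t - y / t) := by positivity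
    rw [norm_neg, Real.norm_eq_abs, abs_of_pos hpos]
    refine mul_le_mul_of_nonneg_left (Real.exp_le_exp.2 ?_) (by positivity)
    have h3 : x / 2 / t ≤ y / t := by gcongr
    linarith
  · refine (ae_restrict_iff' measurableSet_Ioi).2
      (Filter.Eventually.of_forall fun t ht y _ => ?_)
    have ht : (0:ℝ) < t := mem_Ioi.1 ht
    have h1 : HasDerivAt (fun y : ℝ => -t - y / t) (-(1/t)) y := by
      exact ((hasDerivAt_id y).div_const t).const_sub (-t)
    have h2 : HasDerivAt (fun y : ℝ => t ^ (ν - 1) * Real.exp (-t - y / t))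
        (t ^ (ν - 1) * (Real.exp (-t - y / t) * (-(1/t)))) y :=
      ((h1.exp)).const_mul _
    convert h2 using 1
    show -(t ^ (ν - 1 - 1) * Real.exp (-t - y / t))
        = t ^ (ν - 1) * (Real.exp (-t - y / t) * -(1 / t))
    rw [Real.rpow_sub_one ht.ne' (ν - 1)]
    ring
    all_goals rfl

lemma rho_reflect (ν : ℝ) {x : ℝ} (hx : 0 < x) : rho ν x = x ^ ν * rho (-ν) x := by
  have step1 : rho ν x = ∫ s in Ioi (0:ℝ), s ^ (-ν - 1) * Real.exp (-(x * s) - 1 / s) := by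
    rw [rho, ← integral_comp_rpow_Ioi (fun t => t ^ (ν - 1) * Real.exp (-t - x / t))
      (p := (-1 : ℝ)) (by norm_num)]
    refine setIntegral_congr_fun measurableSet_Ioi fun s hs => ?_
    have hs : (0:ℝ) < s := mem_Ioi.1 hs
    have hsinv : s ^ (-1 : ℝ) = s⁻¹ := Real.rpow_neg_one s
    rw [smul_eq_mul, hsinv]
    rw [show (s⁻¹ : ℝ) ^ (ν - 1) = s ^ (-(ν - 1)) by
      rw [← Real.rpow_neg_one s, ← Real.rpow_mul hs.le]
      norm_num]
    rw [show x / s⁻¹ = x * s by field_simp]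
    have : |(-1 : ℝ)| * s ^ ((-1:ℝ) - 1) = s ^ ((-1:ℝ) - 1) := by
      rw [abs_neg, abs_one, one_mul]
    rw [this, ← mul_assoc, ← Real.rpow_add hs]
    rw [show (-1:ℝ) - 1 + -(ν - 1) = -ν - 1 by ring,
      show -s⁻¹ - x * s = -(x * s) - 1/s by rw [one_div]; ring]
  have step2 : (∫ s in Ioi (0:ℝ), s ^ (-ν - 1) * Real.exp (-(x * s) - 1 / s))
      = x ^ ν * rho (-ν) x := by
    have key := integral_comp_mul_left_Ioi
      (fun t => t ^ (-ν - 1) * Real.exp (-t - x / t)) 0 hx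
    rw [mul_zero] at key
    have heq : ∀ s ∈ Ioi (0:ℝ),
        (fun t => t ^ (-ν - 1) * Real.exp (-t - x / t)) (x * s)
          = x ^ (-ν - 1) * (s ^ (-ν - 1) * Real.exp (-(x * s) - 1 / s)) := by
      intro s hs
      have hs : (0:ℝ) < s := mem_Ioi.1 hs
      simp only
      rw [Real.mul_rpow hx.le hs.le, show x / (x * s) = 1 / s by field_simp]
      ring_nf
    rw [setIntegral_congr_fun measurableSet_Ioi heq, integral_const_mul, smul_eq_mul] at key
    have hrho : (∫ t in Ioi (0:ℝ), (fun t : ℝ => t ^ (-ν - 1) * Real.exp (-t - x / t)) t)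
        = rho (-ν) x := rfl
    rw [hrho] at key
    -- key : x ^ (-ν-1) * ∫ ... = x⁻¹ * rho (-ν) x
    have hxpow : (0:ℝ) < x ^ (-ν - 1) := Real.rpow_pos_of_pos hx _
    have h5 : (x ^ (-ν - 1))⁻¹ * x⁻¹ = x ^ ν := by
      rw [← Real.rpow_neg hx.le, ← Real.rpow_neg_one x, ← Real.rpow_add hx]
      norm_num
    calc (∫ s in Ioi (0:ℝ), s ^ (-ν - 1) * Real.exp (-(x * s) - 1 / s))
        = (x ^ (-ν - 1))⁻¹ * (x ^ (-ν - 1) *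
            ∫ s in Ioi (0:ℝ), s ^ (-ν - 1) * Real.exp (-(x * s) - 1 / s)) := by
          field_simp
      _ = (x ^ (-ν - 1))⁻¹ * (x⁻¹ * rho (-ν) x) := by rw [key]
      _ = x ^ ν * rho (-ν) x := by rw [← mul_assoc, h5]
  rw [step1, step2]

lemma rho_rec (ν : ℝ) {x : ℝ} (hx : 0 < x) :
    rho (ν + 1) x = ν * rho ν x + x * rho (ν - 1) x := by
  have h1 : HasDerivAt (rho ν) (-rho (ν - 1) x) x := rho_hasDerivAt ν hx
  have h2 : HasDerivAt (fun y : ℝ => y ^ ν * rho (-ν) y)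
      (ν * x ^ (ν - 1) * rho (-ν) x + x ^ ν * (-rho (-ν - 1) x)) x :=
    (Real.hasDerivAt_rpow_const (Or.inl hx.ne')).mul (rho_hasDerivAt (-ν) hx)
  have heq : rho ν =ᶠ[nhds x] fun y => y ^ ν * rho (-ν) y := by
    filter_upwards [Ioi_mem_nhds hx] with y hy
    exact rho_reflect ν (mem_Ioi.1 hy)
  have h1' : HasDerivAt (fun y : ℝ => y ^ ν * rho (-ν) y) (-rho (ν - 1) x) x :=
    h1.congr_of_eventuallyEq heq.symm
  have huniq := h2.unique h1'
  -- ν * x^(ν-1) * rho(-ν) x - x^ν * rho(-ν-1) x = -rho(ν-1) x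
  have hr1 : rho ν x = x ^ ν * rho (-ν) x := rho_reflect ν hx
  have hr2 : rho (ν + 1) x = x ^ (ν + 1) * rho (-ν - 1) x := by
    rw [rho_reflect (ν + 1) hx, show -(ν + 1) = -ν - 1 by ring]
  have e1 : x * x ^ (ν - 1) = x ^ ν := by
    rw [Real.rpow_sub_one hx.ne']; field_simp
  have e2 : x * x ^ ν = x ^ (ν + 1) := by
    rw [Real.rpow_add_one hx.ne']; ring
  rw [hr1, hr2]
  linear_combination (-x) * huniq + (ν * rho (-ν) x) * e1 + (-(rho (-ν - 1) x)) * e2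

lemma rho_contDiffOn (n : ℕ) (ν : ℝ) : ContDiffOn ℝ n (rho ν) (Ioi 0) := by
  induction n generalizing ν with
  | zero =>
    rw [show ((0 : ℕ) : WithTop ℕ∞) = 0 by rfl, contDiffOn_zero]
    exact fun y hy => ((rho_hasDerivAt ν (mem_Ioi.1 hy)).continuousAt).continuousWithinAt
  | succ k ih =>
    rw [show ((k + 1 : ℕ) : WithTop ℕ∞) = (k : WithTop ℕ∞) + 1 by norm_cast,
      contDiffOn_succ_iff_deriv_of_isOpen isOpen_Ioi]
    refine ⟨fun y hy => ((rho_hasDerivAt ν (mem_Ioi.1 hy)).differentiableAt).differentiableWithinAt,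
      by simp, ?_⟩
    refine ((ih (ν - 1)).neg).congr fun y hy => ?_
    exact (rho_hasDerivAt ν (mem_Ioi.1 hy)).deriv

lemma rho_contDiffOn_top (ν : ℝ) : ContDiffOn ℝ (∞ : WithTop ℕ∞) (rho ν) (Ioi 0) :=
  contDiffOn_infty.2 fun n => rho_contDiffOn n ν

lemma powRho_contDiffOn (c ν : ℝ) :
    ContDiffOn ℝ (∞ : WithTop ℕ∞) (fun y : ℝ => y ^ c * rho ν y) (Ioi 0) := by
  refine ContDiffOn.mul (fun y hy => ?_) (rho_contDiffOn_top ν)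
  exact (Real.contDiffAt_rpow_const_of_ne (mem_Ioi.1 hy).ne').contDiffWithinAt

/-- On the open set `Ioi 0`, iterated (global) derivatives of a smooth function are
differentiable, with the expected derivative. -/
lemma hasDerivAt_iterate_deriv {f : ℝ → ℝ}
    (hf : ContDiffOn ℝ (∞ : WithTop ℕ∞) f (Ioi 0)) (k : ℕ) {x : ℝ} (hx : 0 < x) :
    HasDerivAt (deriv^[k] f) (deriv^[k + 1] f x) x := by
  have hEqOn : ∀ y ∈ Ioi (0:ℝ), iteratedDerivWithin k f (Ioi 0) y = deriv^[k] f y := by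
    intro y hy
    rw [iteratedDerivWithin_eq_iteratedFDerivWithin,
      iteratedFDerivWithin_of_isOpen k isOpen_Ioi hy,
      ← iteratedDeriv_eq_iteratedFDeriv, iteratedDeriv_eq_iterate]
  have hdiff : DifferentiableOn ℝ (iteratedDerivWithin k f (Ioi 0)) (Ioi 0) :=
    hf.differentiableOn_iteratedDerivWithin
      (by exact_mod_cast WithTop.coe_lt_coe.2 (WithTop.coe_lt_top k)) isOpen_Ioi.uniqueDiffOn
  have hAt : DifferentiableAt ℝ (iteratedDerivWithin k f (Ioi 0)) x :=
    (hdiff x hx).differentiableAt (Ioi_mem_nhds hx)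
  have hEv : iteratedDerivWithin k f (Ioi 0) =ᶠ[nhds x] deriv^[k] f := by
    filter_upwards [Ioi_mem_nhds hx] with y hy using hEqOn y hy
  have H : HasDerivAt (deriv^[k] f) (deriv (iteratedDerivWithin k f (Ioi 0)) x) x :=
    hAt.hasDerivAt.congr_of_eventuallyEq hEv.symm
  have : deriv (iteratedDerivWithin k f (Ioi 0)) x = deriv^[k + 1] f x := by
    rw [hEv.deriv_eq, Function.iterate_succ_apply' deriv k f]
  rwa [this] at H

lemma iterate_deriv_congr {f g : ℝ → ℝ} (h : ∀ y ∈ Ioi (0:ℝ), f y = g y) (k : ℕ) :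
    ∀ x ∈ Ioi (0:ℝ), deriv^[k] f x = deriv^[k] g x := by
  induction k with
  | zero => exact h
  | succ m ih =>
    intro x hx
    rw [Function.iterate_succ_apply' deriv m f, Function.iterate_succ_apply' deriv m g]
    have hEv : deriv^[m] f =ᶠ[nhds x] deriv^[m] g := by
      filter_upwards [Ioi_mem_nhds (mem_Ioi.1 hx)] with y hy using ih y hy
    exact hEv.deriv_eq

lemma iterate_deriv_id_mul {f : ℝ → ℝ}
    (hf : ContDiffOn ℝ (∞ : WithTop ℕ∞) f (Ioi 0)) (n : ℕ) :
    ∀ x ∈ Ioi (0:ℝ), deriv^[n + 1] (fun y => y * f y) x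
      = x * deriv^[n + 1] f x + (n + 1 : ℝ) * deriv^[n] f x := by
  induction n with
  | zero =>
    intro x hx
    have hx : (0:ℝ) < x := mem_Ioi.1 hx
    have h1 : HasDerivAt (fun y : ℝ => y * f y) (1 * f x + x * deriv^[1] f x) x :=
      (hasDerivAt_id x).mul (hasDerivAt_iterate_deriv hf 0 hx)
    simp only [zero_add, Function.iterate_one, Function.iterate_zero, id_eq,
      Nat.cast_zero] at h1 ⊢
    rw [h1.deriv]; ring
  | succ m ih =>
    intro x hx
    have hx : (0:ℝ) < x := mem_Ioi.1 hx
    rw [Function.iterate_succ_apply' deriv (m + 1) (fun y => y * f y)]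
    have hEv : deriv^[m + 1] (fun y => y * f y) =ᶠ[nhds x]
        fun y => y * deriv^[m + 1] f y + (m + 1 : ℝ) * deriv^[m] f y := by
      filter_upwards [Ioi_mem_nhds hx] with y hy using ih y hy
    rw [hEv.deriv_eq]
    have h1 : HasDerivAt (fun y : ℝ => y * deriv^[m + 1] f y + (m + 1 : ℝ) * deriv^[m] f y)
        ((1 * deriv^[m + 1] f x + x * deriv^[m + 2] f x) + (m + 1 : ℝ) * deriv^[m + 1] f x) x := by
      refine HasDerivAt.add ?_ ?_
      · exact (hasDerivAt_id x).mul (hasDerivAt_iterate_deriv hf (m + 1) hx)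
      · exact (hasDerivAt_iterate_deriv hf m hx).const_mul _
    rw [h1.deriv]
    push_cast
    ring

lemma iterate_deriv_lin {f g : ℝ → ℝ}
    (hf : ContDiffOn ℝ (∞ : WithTop ℕ∞) f (Ioi 0))
    (hg : ContDiffOn ℝ (∞ : WithTop ℕ∞) g (Ioi 0)) (c : ℝ) (n : ℕ) :
    ∀ x ∈ Ioi (0:ℝ), deriv^[n] (fun y => c * f y - g y) x
      = c * deriv^[n] f x - deriv^[n] g x := by
  induction n with
  | zero => intro x _; simp
  | succ m ih =>
    intro x hx
    have hx : (0:ℝ) < x := mem_Ioi.1 hx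
    rw [Function.iterate_succ_apply' deriv m (fun y => c * f y - g y)]
    have hEv : deriv^[m] (fun y => c * f y - g y) =ᶠ[nhds x]
        fun y => c * deriv^[m] f y - deriv^[m] g y := by
      filter_upwards [Ioi_mem_nhds hx] with y hy using ih y hy
    rw [hEv.deriv_eq]
    have h1 : HasDerivAt (fun y : ℝ => c * deriv^[m] f y - deriv^[m] g y)
        (c * deriv^[m + 1] f x - deriv^[m + 1] g x) x :=
      ((hasDerivAt_iterate_deriv hf m hx).const_mul c).sub (hasDerivAt_iterate_deriv hg m hx)
    rw [h1.deriv, Function.iterate_succ_apply' deriv m f,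
      Function.iterate_succ_apply' deriv m g]

theorem S_recurrence (ν α : ℝ) (n : ℕ) (hn : 1 ≤ n) (x : ℝ) (hx : 0 < x) :
    S (n + 1) ν α x = (2 * n + 1 + ν + α) * S n ν α x
      - n * (n + ν + α) * S (n - 1) ν α x - x * S n (ν + 1) (α - 1) x := by
  obtain ⟨m, rfl⟩ : ∃ m : ℕ, n = m + 1 := ⟨n - 1, (Nat.succ_pred_eq_of_pos hn).symm⟩
  clear hn
  set n := m + 1 with hndef
  -- the basic functions
  set β : ℝ := (n : ℝ) + α with hβ
  set fn : ℝ → ℝ := fun y => y ^ β * rho ν y with hfn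
  set fm : ℝ → ℝ := fun y => y ^ (β - 1) * rho ν y with hfm
  set g : ℝ → ℝ := fun y => y ^ ((n : ℝ) + (α - 1)) * rho (ν + 1) y with hg
  have hfnC : ContDiffOn ℝ (∞ : WithTop ℕ∞) fn (Ioi 0) := powRho_contDiffOn β ν
  have hfmC : ContDiffOn ℝ (∞ : WithTop ℕ∞) fm (Ioi 0) := powRho_contDiffOn (β - 1) ν
  have hgC : ContDiffOn ℝ (∞ : WithTop ℕ∞) g (Ioi 0) := powRho_contDiffOn _ (ν + 1)
  have hxIoi : x ∈ Ioi (0:ℝ) := mem_Ioi.2 hx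
  -- derivative of fn on Ioi 0
  have hderiv_fn : ∀ y ∈ Ioi (0:ℝ), deriv fn y = (β + ν) * fm y - g y := by
    intro y hy
    have hy : (0:ℝ) < y := mem_Ioi.1 hy
    have h1 : HasDerivAt fn
        (β * y ^ (β - 1) * rho ν y + y ^ β * (-rho (ν - 1) y)) y :=
      (Real.hasDerivAt_rpow_const (Or.inl hy.ne')).mul (rho_hasDerivAt ν hy)
    rw [h1.deriv]
    have hrec : rho (ν + 1) y = ν * rho ν y + y * rho (ν - 1) y := rho_rec ν hy
    have hyb : y ^ β = y ^ (β - 1) * y := by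
      rw [Real.rpow_sub_one hy.ne']; field_simp
    have hexp : y ^ ((n : ℝ) + (α - 1)) = y ^ (β - 1) := by
      rw [show (n : ℝ) + (α - 1) = β - 1 by rw [hβ]; ring]
    simp only [hfm, hg, hexp]
    rw [hyb]
    linear_combination (y ^ (β - 1)) * hrec
  -- Step A : S (n+1) ν α x
  have hcongrA : ∀ y ∈ Ioi (0:ℝ),
      (fun y : ℝ => y ^ (((n + 1 : ℕ) : ℝ) + α) * rho ν y) y = (fun y => y * fn y) y := by
    intro y hy
    have hy : (0:ℝ) < y := mem_Ioi.1 hy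
    simp only [hfn]
    rw [show (((n + 1 : ℕ) : ℝ) + α) = β + 1 by push_cast [hβ]; ring,
      Real.rpow_add_one hy.ne']
    ring
  have stepA : S (n + 1) ν α x = x * deriv^[n + 1] fn x + ((n : ℝ) + 1) * S n ν α x := by
    rw [S, iterate_deriv_congr hcongrA (n + 1) x hxIoi,
      iterate_deriv_id_mul hfnC n x hxIoi]
    rfl
  -- Step B+C : deriv^[n+1] fn x
  have stepB : deriv^[n + 1] fn x
      = (β + ν) * deriv^[n] fm x - S n (ν + 1) (α - 1) x := by
    rw [Function.iterate_succ_apply deriv n fn]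
    have hc : ∀ y ∈ Ioi (0:ℝ), deriv fn y = (fun y => (β + ν) * fm y - g y) y :=
      hderiv_fn
    rw [iterate_deriv_congr hc n x hxIoi, iterate_deriv_lin hfmC hgC (β + ν) n x hxIoi]
    rfl
  -- Step D : S n ν α x in terms of fm
  have hcongrD : ∀ y ∈ Ioi (0:ℝ),
      (fun y : ℝ => y ^ ((n : ℝ) + α) * rho ν y) y = (fun y => y * fm y) y := by
    intro y hy
    have hy : (0:ℝ) < y := mem_Ioi.1 hy
    simp only [hfm]
    rw [show ((n : ℝ) + α) = (β - 1) + 1 by ring, Real.rpow_add_one hy.ne']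
    ring
  have stepD : S n ν α x = x * deriv^[n] fm x + (n : ℝ) * S (n - 1) ν α x := by
    have hSm : S (n - 1) ν α x = deriv^[m] fm x := by
      rw [S]
      simp only [hndef, Nat.add_sub_cancel]
      have hfun : (fun y : ℝ => y ^ ((m : ℝ) + α) * rho ν y) = fm := by
        funext y
        rw [hfm, show ((m : ℝ) + α) = β - 1 by rw [hβ, hndef]; push_cast; ring]
      rw [hfun]
    have h1 : S n ν α x = deriv^[n] (fun y => y * fm y) x := by
      rw [S]; exact iterate_deriv_congr hcongrD n x hxIoi
    have h2 : deriv^[n] (fun y => y * fm y) x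
        = x * deriv^[n] fm x + ((m : ℝ) + 1) * deriv^[m] fm x :=
      iterate_deriv_id_mul hfmC m x hxIoi
    rw [h1, h2, ← hSm, hndef]
    push_cast
    ring
  -- assemble
  have hD : x * deriv^[n] fm x = S n ν α x - (n : ℝ) * S (n - 1) ν α x := by
    rw [stepD]; ring
  rw [stepA, stepB]
  have : x * ((β + ν) * deriv^[n] fm x - S n (ν + 1) (α - 1) x)
      = (β + ν) * (x * deriv^[n] fm x) - x * S n (ν + 1) (α - 1) x := by ring
  rw [this, hD, hβ]
  push_cast
  ring
end

section
/- Let ν ≥ 0 and α > −1. For every real polynomial p(x) = Σ_{j=0}^n a_j x^j, ∫₀^∞ p(x) x^α ρ_ν(x) dx = Γ(1+α) · ∫₀^∞ t^ν e^{-t} · (p(θ){t^α})(t) dt, where (p(θ){t^α})(t) = Σ_{j=0}^n a_j (1+α)_j t^{α+j}. -/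
open MeasureTheory Real Set
open scoped ENNReal

lemma inner_integrable {β t : ℝ} (hβ : -1 < β) (ht : 0 < t) :
    IntegrableOn (fun x : ℝ => x ^ β * Real.exp (-(x / t))) (Ioi (0:ℝ)) := by
  have h0 : IntegrableOn (fun x : ℝ => Real.exp (-x) * x ^ β) (Ioi 0) := by
    simpa using Real.GammaIntegral_convergent (by linarith : 0 < β + 1)
  have h1 : IntegrableOn (fun x : ℝ => Real.exp (-(1/t * x)) * (1/t * x) ^ β) (Ioi 0) := by
    have := (integrableOn_Ioi_comp_mul_left_iff (fun x : ℝ => Real.exp (-x) * x ^ β) 0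
      (by positivity : 0 < 1/t)).mpr (by simpa using h0)
    simpa using this
  have h2 : IntegrableOn (fun x : ℝ => t ^ β * (Real.exp (-(1/t * x)) * (1/t * x) ^ β))
      (Ioi (0:ℝ)) := h1.const_mul (t ^ β)
  apply h2.congr_fun ?_ measurableSet_Ioi
  intro x hx
  have hx0 : (0:ℝ) < x := hx
  have h3 : (1/t * x) ^ β = (1/t) ^ β * x ^ β :=
    Real.mul_rpow (by positivity) hx0.le
  have htβ : t ^ β * (1/t) ^ β = 1 := by
    rw [← Real.mul_rpow ht.le (by positivity), mul_one_div, div_self ht.ne', Real.one_rpow]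
  simp only []
  rw [h3, one_div_mul_eq_div]
  calc t ^ β * (Real.exp (-(x / t)) * ((1/t) ^ β * x ^ β))
      = (t ^ β * (1/t) ^ β) * (x ^ β * Real.exp (-(x / t))) := by ring
    _ = x ^ β * Real.exp (-(x / t)) := by rw [htβ, one_mul]

lemma inner_integral {β t : ℝ} (hβ : -1 < β) (ht : 0 < t) :
    ∫ x in Ioi (0:ℝ), x ^ β * Real.exp (-(x / t)) = t ^ (β + 1) * Real.Gamma (β + 1) := by
  have h := Real.integral_rpow_mul_exp_neg_mul_Ioi (a := β+1) (r := 1/t)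
    (by linarith) (by positivity)
  simp only [add_sub_cancel_right, one_div_one_div, one_div_mul_eq_div] at h
  simpa using h

lemma rho_meas (ν : ℝ) :
    Measurable (fun x : ℝ => (∫ t in Ioi (0:ℝ), t ^ (ν - 1) * Real.exp (-t - x / t))) := by
  have h : StronglyMeasurable (fun p : ℝ × ℝ => p.2 ^ (ν - 1) * Real.exp (-p.2 - p.1 / p.2)) := by
    apply Measurable.stronglyMeasurable; fun_prop
  exact (h.integral_prod_right' (ν := volume.restrict (Ioi 0))).measurable

lemma moment {ν β : ℝ} (hν : 0 ≤ ν) (hβ : -1 < β) :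
    IntegrableOn (fun x : ℝ => x ^ β * rho ν x) (Ioi (0:ℝ)) ∧
    ∫ x in Ioi (0:ℝ), x ^ β * rho ν x
      = Real.Gamma (β + 1) * Real.Gamma (ν + β + 1) := by
  simp only [rho]
  have hνβ : (0:ℝ) < ν + β + 1 := by linarith
  set G : ℝ → ℝ → ℝ≥0∞ :=
    fun x t => ENNReal.ofReal (x ^ β * (t ^ (ν-1) * Real.exp (-t - x/t))) with hG
  have hGmeas : Measurable (Function.uncurry G) := by
    apply Measurable.ennreal_ofReal; fun_prop
  -- inner x-integral for fixed t
  have key : ∀ t ∈ Ioi (0:ℝ), (∫⁻ x in Ioi (0:ℝ), G x t)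
      = ENNReal.ofReal (Real.Gamma (β+1)) * ENNReal.ofReal (Real.exp (-t) * t ^ (ν+β+1-1)) := by
    intro t ht
    have ht : (0:ℝ) < t := ht
    have heq : ∀ x ∈ Ioi (0:ℝ), G x t
        = ENNReal.ofReal (t ^ (ν-1) * Real.exp (-t)) *
          ENNReal.ofReal (x ^ β * Real.exp (-(x/t))) := by
      intro x hx
      have hx : (0:ℝ) < x := hx
      rw [← ENNReal.ofReal_mul (by positivity)]
      simp only [hG]
      congr 1
      rw [show -t - x/t = -t + -(x/t) by ring, Real.exp_add]
      ring
    rw [setLIntegral_congr_fun measurableSet_Ioi heq,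
      lintegral_const_mul' _ _ ENNReal.ofReal_ne_top,
      ← ofReal_integral_eq_lintegral_ofReal (inner_integrable hβ ht)
        ((ae_restrict_iff' measurableSet_Ioi).2 (ae_of_all _ fun x hx => by
          have hx : (0:ℝ) < x := hx; positivity)),
      inner_integral hβ ht,
      ← ENNReal.ofReal_mul (by positivity),
      ← ENNReal.ofReal_mul (Real.Gamma_pos_of_pos (show (0:ℝ) < β+1 by linarith)).le]
    refine congrArg ENNReal.ofReal ?_
    rw [show ν+β+1-1 = (ν-1)+(β+1) by ring, Real.rpow_add ht (ν-1) (β+1)]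
    ring
  -- the swapped double integral
  have L2 : (∫⁻ t in Ioi (0:ℝ), ∫⁻ x in Ioi (0:ℝ), G x t)
      = ENNReal.ofReal (Real.Gamma (β+1) * Real.Gamma (ν+β+1)) := by
    rw [setLIntegral_congr_fun measurableSet_Ioi key,
      lintegral_const_mul' _ _ ENNReal.ofReal_ne_top,
      ← ofReal_integral_eq_lintegral_ofReal (Real.GammaIntegral_convergent hνβ)
        ((ae_restrict_iff' measurableSet_Ioi).2 (ae_of_all _ fun t htt => by
          have htt : (0:ℝ) < t := htt; positivity)),
      ← Real.Gamma_eq_integral hνβ,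
      ← ENNReal.ofReal_mul (Real.Gamma_pos_of_pos (show (0:ℝ) < β+1 by linarith)).le]
  have L1 : (∫⁻ x in Ioi (0:ℝ), ∫⁻ t in Ioi (0:ℝ), G x t)
      = ENNReal.ofReal (Real.Gamma (β+1) * Real.Gamma (ν+β+1)) := by
    rw [lintegral_lintegral_swap hGmeas.aemeasurable]; exact L2
  -- inner t-lintegral
  set J : ℝ → ℝ≥0∞ :=
    fun x => ∫⁻ t in Ioi (0:ℝ), ENNReal.ofReal (t ^ (ν-1) * Real.exp (-t - x/t)) with hJ
  have hGJ : ∀ x ∈ Ioi (0:ℝ), (∫⁻ t in Ioi (0:ℝ), G x t) = ENNReal.ofReal (x ^ β) * J x := by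
    intro x hx
    have hx : (0:ℝ) < x := hx
    rw [hJ, ← lintegral_const_mul' _ _ ENNReal.ofReal_ne_top]
    refine lintegral_congr fun t => ?_
    rw [← ENNReal.ofReal_mul (by positivity)]
  have hGinnermeas : Measurable (fun x : ℝ => ∫⁻ t in Ioi (0:ℝ), G x t) :=
    hGmeas.lintegral_prod_right'
  have hfin : ∀ᵐ x ∂(volume.restrict (Ioi (0:ℝ))), (∫⁻ t in Ioi (0:ℝ), G x t) < ⊤ :=
    ae_lt_top hGinnermeas (by rw [L1]; exact ENNReal.ofReal_ne_top)
  -- rho expressed as toReal of J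
  have hrho : ∀ x : ℝ, (∫ t in Ioi (0:ℝ), t ^ (ν - 1) * Real.exp (-t - x / t))
      = (J x).toReal := by
    intro x
    rw [hJ]
    exact integral_eq_lintegral_of_nonneg_ae
      ((ae_restrict_iff' measurableSet_Ioi).2 (ae_of_all _ fun t htt => by
        have htt : (0:ℝ) < t := htt; positivity))
      (by apply Measurable.aestronglyMeasurable; fun_prop)
  -- a.e. identity for ofReal of the integrand
  have hae : ∀ᵐ x ∂(volume.restrict (Ioi (0:ℝ))),
      ENNReal.ofReal (x ^ β * (∫ t in Ioi (0:ℝ), t ^ (ν - 1) * Real.exp (-t - x / t)))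
        = ∫⁻ t in Ioi (0:ℝ), G x t := by
    filter_upwards [hfin, (ae_restrict_iff' measurableSet_Ioi).2
      (ae_of_all _ fun (x:ℝ) (hx : x ∈ Ioi (0:ℝ)) => hx)] with x hx1 hx2
    have hx : (0:ℝ) < x := hx2
    have hJx : J x ≠ ⊤ := by
      intro hJt
      rw [hGJ x hx2, hJt, ENNReal.mul_top (by
        simp only [ne_eq, ENNReal.ofReal_eq_zero, not_le]; positivity)] at hx1
      exact (lt_irrefl _ hx1).elim
    rw [hrho x, hGJ x hx2, ← ENNReal.ofReal_toReal hJx, ← ENNReal.ofReal_mul (by positivity),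
      ENNReal.ofReal_toReal hJx]
  have hmeas2 : AEStronglyMeasurable
      (fun x : ℝ => x ^ β * (∫ t in Ioi (0:ℝ), t ^ (ν - 1) * Real.exp (-t - x / t)))
      (volume.restrict (Ioi (0:ℝ))) := by
    exact (((by fun_prop : Measurable fun x : ℝ => x ^ β)).mul (rho_meas ν)).aestronglyMeasurable
  have hnn : 0 ≤ᵐ[volume.restrict (Ioi (0:ℝ))]
      (fun x : ℝ => x ^ β * (∫ t in Ioi (0:ℝ), t ^ (ν - 1) * Real.exp (-t - x / t))) := by
    refine (ae_restrict_iff' measurableSet_Ioi).2 (ae_of_all _ fun x hx => ?_)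
    have hx : (0:ℝ) < x := hx
    have h1 : (0:ℝ) ≤ ∫ t in Ioi (0:ℝ), t ^ (ν - 1) * Real.exp (-t - x / t) := by
      refine integral_nonneg_of_ae ((ae_restrict_iff' measurableSet_Ioi).2
        (ae_of_all _ fun t htt => ?_))
      have htt : (0:ℝ) < t := htt
      positivity
    positivity
  have hlin : (∫⁻ x in Ioi (0:ℝ),
      ENNReal.ofReal (x ^ β * (∫ t in Ioi (0:ℝ), t ^ (ν - 1) * Real.exp (-t - x / t))))
      = ENNReal.ofReal (Real.Gamma (β+1) * Real.Gamma (ν+β+1)) := by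
    rw [lintegral_congr_ae hae]; exact L1
  constructor
  · refine ⟨hmeas2, ?_⟩
    rw [hasFiniteIntegral_iff_ofReal hnn, hlin]
    exact ENNReal.ofReal_lt_top
  · rw [integral_eq_lintegral_of_nonneg_ae hnn hmeas2, hlin, ENNReal.toReal_ofReal]
    have := (Real.Gamma_pos_of_pos (show (0:ℝ) < β+1 by linarith)).le
    have := (Real.Gamma_pos_of_pos hνβ).le
    positivity

theorem composition_integral_identity (ν α : ℝ) (hν : 0 ≤ ν) (hα : -1 < α)
    (n : ℕ) (a : ℕ → ℝ) :
    ∫ x in Ioi (0:ℝ), (∑ j ∈ Finset.range (n + 1), a j * x ^ j) * x ^ α * rho ν x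
      = Real.Gamma (1 + α) * ∫ t in Ioi (0:ℝ), t ^ ν * Real.exp (-t) *
          (∑ j ∈ Finset.range (n + 1),
            a j * (Real.Gamma (1 + α + j) / Real.Gamma (1 + α)) * t ^ (α + (j : ℝ))) := by
  have hΓ : Real.Gamma (1 + α) ≠ 0 := (Real.Gamma_pos_of_pos (by linarith)).ne'
  have hβj : ∀ j : ℕ, -1 < α + (j:ℝ) := fun j => by
    have : (0:ℝ) ≤ (j:ℝ) := Nat.cast_nonneg j
    linarith
  -- LHS
  have hL : ∫ x in Ioi (0:ℝ), (∑ j ∈ Finset.range (n + 1), a j * x ^ j) * x ^ α * rho ν x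
      = ∑ j ∈ Finset.range (n + 1),
          a j * (Real.Gamma (α + (j:ℝ) + 1) * Real.Gamma (ν + (α + (j:ℝ)) + 1)) := by
    rw [setIntegral_congr_fun measurableSet_Ioi (g := fun x =>
        ∑ j ∈ Finset.range (n + 1), a j * (x ^ (α + (j:ℝ)) * rho ν x)) ?_]
    · rw [integral_finset_sum _ fun j _ => ((moment hν (hβj j)).1.const_mul (a j))]
      refine Finset.sum_congr rfl fun j _ => ?_
      rw [integral_const_mul, (moment hν (hβj j)).2]
    · intro x hx
      have hx : (0:ℝ) < x := hx
      simp only []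
      rw [Finset.sum_mul, Finset.sum_mul]
      refine Finset.sum_congr rfl fun j _ => ?_
      have hpow : (x:ℝ) ^ (j:ℕ) * x ^ α = x ^ (α + (j:ℝ)) := by
        rw [← Real.rpow_natCast x j, ← Real.rpow_add hx, add_comm]
      calc a j * x ^ (j:ℕ) * x ^ α * rho ν x
          = a j * ((x ^ (j:ℕ) * x ^ α) * rho ν x) := by ring
        _ = a j * (x ^ (α + (j:ℝ)) * rho ν x) := by rw [hpow]
  -- RHS
  have hR : ∫ t in Ioi (0:ℝ), t ^ ν * Real.exp (-t) *
        (∑ j ∈ Finset.range (n + 1),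
          a j * (Real.Gamma (1 + α + j) / Real.Gamma (1 + α)) * t ^ (α + (j : ℝ)))
      = ∑ j ∈ Finset.range (n + 1),
          a j * (Real.Gamma (1 + α + j) / Real.Gamma (1 + α)) *
            Real.Gamma (ν + (α + (j:ℝ)) + 1) := by
    have hs : ∀ j : ℕ, (0:ℝ) < ν + (α + (j:ℝ)) + 1 := fun j => by
      have := hβj j; linarith
    rw [setIntegral_congr_fun measurableSet_Ioi (g := fun t =>
        ∑ j ∈ Finset.range (n + 1),
          a j * (Real.Gamma (1 + α + j) / Real.Gamma (1 + α)) *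
            (Real.exp (-t) * t ^ (ν + (α + (j:ℝ)) + 1 - 1))) ?_]
    · rw [integral_finset_sum _ fun j _ =>
        (Real.GammaIntegral_convergent (hs j)).const_mul _]
      refine Finset.sum_congr rfl fun j _ => ?_
      rw [integral_const_mul, ← Real.Gamma_eq_integral (hs j)]
    · intro t ht
      have ht : (0:ℝ) < t := ht
      simp only []
      rw [Finset.mul_sum]
      refine Finset.sum_congr rfl fun j _ => ?_
      rw [show ν + (α + (j:ℝ)) + 1 - 1 = ν + (α + (j:ℝ)) by ring,
        Real.rpow_add ht ν (α + (j:ℝ))]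
      ring
  rw [hL, hR, Finset.mul_sum]
  refine Finset.sum_congr rfl fun j _ => ?_
  rw [show α + (j:ℝ) + 1 = 1 + α + (j:ℝ) by ring]
  field_simp
end
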